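/- arXiv:1001.4319 — 11 statements merged into one kernel-verified Lean document; each statement's English description precedes it below -/
import Mathlib

section
/- Let α₁, α₂, α₃, α₄ ∈ ℂ satisfy α₁·conj(α₄) − conj(α₂)·α₃ = 1, and suppose that α₁·conj(α₃) ∈ ℝ and α₂·conj(α₄) ∈ ℝ. Then αⱼ·conj(αⱼ′) ∈ ℝ for every j, j′ ∈ {1,2,3,4}. -/
open ComplexConjugate

/-- Lemma 3 of the paper: if `α₁ conj α₄ - conj α₂ α₃ = 1` and
`α₁ conj α₃, α₂ conj α₄ ∈ ℝ`, then `αⱼ conj αⱼ' ∈ ℝ` for all `j, j'`. -/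
theorem stmt0 (α : Fin 4 → ℂ)
    (hA1 : α 0 * conj (α 3) - conj (α 1) * α 2 = 1)
    (hA2a : (α 0 * conj (α 2)).im = 0)
    (hA2b : (α 1 * conj (α 3)).im = 0) :
    ∀ j j' : Fin 4, (α j * conj (α j')).im = 0 := by
  have swap : ∀ z w : ℂ, (z * conj w).im = 0 → (w * conj z).im = 0 := by
    intro z w h
    simp only [Complex.mul_im, Complex.conj_re, Complex.conj_im] at h ⊢
    linarith
  have self : ∀ z : ℂ, (z * conj z).im = 0 := by
    intro z
    simp only [Complex.mul_im, Complex.conj_re, Complex.conj_im]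
    ring
  simp only [Complex.mul_im, Complex.mul_re, Complex.one_im,
    Complex.conj_re, Complex.conj_im] at hA2a hA2b
  -- (α 1 * conj (α 2)).im = 0
  have e1 : α 1 * conj (α 2) + (conj (α 1) * α 2) * (α 1 * conj (α 2)) =
      (α 0 * conj (α 2)) * (α 1 * conj (α 3)) := by
    linear_combination (-(α 1 * conj (α 2))) * hA1
  have h12 : (α 1 * conj (α 2)).im = 0 := by
    have h := congrArg Complex.im e1
    simp only [Complex.add_im, Complex.mul_im, Complex.mul_re,
      Complex.conj_re, Complex.conj_im] at h
    simp only [Complex.mul_im, Complex.conj_re, Complex.conj_im]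
    linear_combination h + ((α 0).re*(α 2).re + (α 0).im*(α 2).im) * hA2b
      + ((α 1).re*(α 3).re + (α 1).im*(α 3).im) * hA2a
  -- (α 0 * conj (α 3)).im = 0
  have h03 : (α 0 * conj (α 3)).im = 0 := by
    have h := congrArg Complex.im hA1
    simp only [Complex.sub_im, Complex.mul_im, Complex.one_im,
      Complex.conj_re, Complex.conj_im] at h
    simp only [Complex.mul_im, Complex.conj_re, Complex.conj_im] at h12 ⊢
    linarith
  -- (α 0 * conj (α 1)).im = 0
  have e2 : conj (α 0) * α 1 = (α 0 * conj (α 0)) * (α 1 * conj (α 3))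
      - (α 1 * conj (α 1)) * (conj (α 0) * α 2) := by
    linear_combination (-(conj (α 0) * α 1)) * hA1
  have h01 : (α 0 * conj (α 1)).im = 0 := by
    have h := congrArg Complex.im e2
    simp only [Complex.sub_im, Complex.mul_im, Complex.mul_re,
      Complex.conj_re, Complex.conj_im] at h
    simp only [Complex.mul_im, Complex.conj_re, Complex.conj_im]
    linear_combination -h - ((α 0).re^2 + (α 0).im^2) * hA2b
      - ((α 1).re^2 + (α 1).im^2) * hA2a
  -- (α 2 * conj (α 3)).im = 0
  have e3 : conj (α 2) * α 3 = (α 0 * conj (α 2)) * (α 3 * conj (α 3))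
      - (α 2 * conj (α 2)) * (conj (α 1) * α 3) := by
    linear_combination (-(conj (α 2) * α 3)) * hA1
  have h23 : (α 2 * conj (α 3)).im = 0 := by
    have h := congrArg Complex.im e3
    simp only [Complex.sub_im, Complex.mul_im, Complex.mul_re,
      Complex.conj_re, Complex.conj_im] at h
    simp only [Complex.mul_im, Complex.conj_re, Complex.conj_im]
    linear_combination -h - ((α 3).re^2 + (α 3).im^2) * hA2a
      - ((α 2).re^2 + (α 2).im^2) * hA2b
  have hA2a' : (α 0 * conj (α 2)).im = 0 := by
    simp only [Complex.mul_im, Complex.conj_re, Complex.conj_im]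
    linarith
  have hA2b' : (α 1 * conj (α 3)).im = 0 := by
    simp only [Complex.mul_im, Complex.conj_re, Complex.conj_im]
    linarith
  intro j j'
  fin_cases j <;> fin_cases j' <;>
    first
      | exact self _
      | exact h01 | exact h12 | exact h23 | exact h03 | exact hA2a' | exact hA2b'
      | exact swap _ _ h01 | exact swap _ _ h12 | exact swap _ _ h23
      | exact swap _ _ h03 | exact swap _ _ hA2a' | exact swap _ _ hA2b'
end

section
/- If z₁, z₂ ∈ ℂ satisfy z₁·conj(z₂) = (1 − (|z₁|² + |z₂|²))/√2, then |z₁ + z₂·e^{iπ/4}| = 1 and |z₁ + z₂·e^{−iπ/4}| = 1. -/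
open ComplexConjugate Real

lemma aux_stmt2 (z₁ z₂ : ℂ) (θ : ℝ) (hc : Real.cos θ = Real.sqrt 2 / 2)
    (h : z₁ * conj z₂ =
      (((1 - (‖z₁‖ ^ 2 + ‖z₂‖ ^ 2)) / Real.sqrt 2 : ℝ) : ℂ)) :
    ‖z₁ + z₂ * Complex.exp (Complex.I * θ)‖ = 1 := by
  have h2 : Real.sqrt 2 > 0 := by positivity
  have hsq : Real.sqrt 2 * Real.sqrt 2 = 2 := Real.mul_self_sqrt (by norm_num)
  have he : (Complex.exp (Complex.I * θ)).re = Real.cos θ := by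
    rw [Complex.exp_re]; simp
  have hnse : Complex.normSq (Complex.exp (Complex.I * θ)) = 1 := by
    rw [Complex.normSq_eq_norm_sq, Complex.norm_exp]; simp
  have key : ‖z₁ + z₂ * Complex.exp (Complex.I * θ)‖ ^ 2 = 1 := by
    rw [Complex.sq_norm, Complex.normSq_add, Complex.normSq_mul, hnse, mul_one]
    have : (z₁ * conj (z₂ * Complex.exp (Complex.I * θ))).re
        = ((1 - (‖z₁‖ ^ 2 + ‖z₂‖ ^ 2)) / Real.sqrt 2)
          * (Complex.exp (Complex.I * θ)).re := by
      rw [map_mul, ← mul_assoc, h]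
      rw [show (((1 - (‖z₁‖ ^ 2 + ‖z₂‖ ^ 2)) / Real.sqrt 2 : ℝ) : ℂ)
          * conj (Complex.exp (Complex.I * θ))
          = ((1 - (‖z₁‖ ^ 2 + ‖z₂‖ ^ 2)) / Real.sqrt 2 : ℝ)
            • conj (Complex.exp (Complex.I * θ)) from (Complex.coe_smul _ _).symm]
      rw [Complex.smul_re, Complex.conj_re, smul_eq_mul]
    rw [this, he, hc, Complex.normSq_eq_norm_sq, Complex.normSq_eq_norm_sq]
    field_simp
    ring
  nlinarith [norm_nonneg (z₁ + z₂ * Complex.exp (Complex.I * θ)), key]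

/-- Lemma 5 of the paper: if `z₁ conj z₂ = (1 - (|z₁|² + |z₂|²))/√2`, then
`|z₁ + z₂ e^{±iπ/4}| = 1`. -/
theorem stmt2 (z₁ z₂ : ℂ)
    (h : z₁ * conj z₂ =
      (((1 - (‖z₁‖ ^ 2 + ‖z₂‖ ^ 2)) / Real.sqrt 2 : ℝ) : ℂ)) :
    ‖z₁ + z₂ * Complex.exp (Complex.I * (π / 4))‖ = 1 ∧
    ‖z₁ + z₂ * Complex.exp (-(Complex.I * (π / 4)))‖ = 1 := by
  constructor
  · have heq : z₂ * Complex.exp (Complex.I * ((π : ℂ) / 4))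
        = z₂ * Complex.exp (Complex.I * ((π / 4 : ℝ) : ℂ)) := by
      congr 2
      push_cast
      ring
    rw [heq]
    exact aux_stmt2 z₁ z₂ (π / 4) Real.cos_pi_div_four h
  · have heq : z₂ * Complex.exp (-(Complex.I * ((π : ℂ) / 4)))
        = z₂ * Complex.exp (Complex.I * ((-(π / 4) : ℝ) : ℂ)) := by
      congr 2
      push_cast
      ring
    rw [heq]
    exact aux_stmt2 z₁ z₂ (-(π / 4)) (by rw [Real.cos_neg, Real.cos_pi_div_four]) h
end

section
/- Let α = (α₁, α₂, α₃, α₄) ∈ ℂ⁴ belong to the class 𝒜. If αⱼ′ ≠ 0 for some j′ ∈ {1,2,3,4}, then αⱼ·αⱼ′⁻¹ ∈ ℝ for every j ∈ {1,2,3,4}. -/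
open ComplexConjugate

/-- The vector `(α 0, α 1, α 2, α 3)` belongs to the class 𝒜 of the paper:
(𝒜1) `α₁ conj α₄ - conj α₂ α₃ = 1`, (𝒜2) `α₁ conj α₃, α₂ conj α₄ ∈ ℝ`. -/
def ClassA (α : Fin 4 → ℂ) : Prop :=
  α 0 * conj (α 3) - conj (α 1) * α 2 = 1 ∧
  (α 0 * conj (α 2)).im = 0 ∧ (α 1 * conj (α 3)).im = 0

private lemma aux_ratio (z w : ℂ) (h : z.im * w.re - z.re * w.im = 0) :
    (z * w⁻¹).im = 0 := by
  rw [Complex.mul_im, Complex.inv_re, Complex.inv_im]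
  rw [show z.re * (-w.im / Complex.normSq w) + z.im * (w.re / Complex.normSq w)
      = (z.im * w.re - z.re * w.im) / Complex.normSq w by ring, h, zero_div]

set_option maxHeartbeats 1000000 in
/-- If `α ∈ 𝒜` and `α_{j'} ≠ 0`, then `αⱼ αⱼ'⁻¹ ∈ ℝ` for all `j`. -/
theorem stmt3 (α : Fin 4 → ℂ) (hA : ClassA α) (j' : Fin 4) (hj' : α j' ≠ 0) :
    ∀ j : Fin 4, (α j * (α j')⁻¹).im = 0 := by
  obtain ⟨hA1, hA2, hA3⟩ := hA
  set a1 := (α 0).re with ha1; set a2 := (α 0).im with ha2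
  set b1 := (α 1).re with hb1; set b2 := (α 1).im with hb2
  set c1 := (α 2).re with hc1; set c2 := (α 2).im with hc2
  set d1 := (α 3).re with hd1; set d2 := (α 3).im with hd2
  have E1 : a2 * c1 - a1 * c2 = 0 := by
    have := hA2
    simp only [Complex.mul_im, Complex.conj_re, Complex.conj_im] at this
    linarith
  have E2 : b2 * d1 - b1 * d2 = 0 := by
    have := hA3
    simp only [Complex.mul_im, Complex.conj_re, Complex.conj_im] at this
    linarith
  have E3 : a1 * d1 + a2 * d2 - b1 * c1 - b2 * c2 = 1 := by
    have := congrArg Complex.re hA1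
    simp only [Complex.sub_re, Complex.mul_re, Complex.conj_re, Complex.conj_im,
      Complex.one_re] at this
    linarith
  have E4 : a2 * d1 - a1 * d2 - b1 * c2 + b2 * c1 = 0 := by
    have := congrArg Complex.im hA1
    simp only [Complex.sub_im, Complex.mul_im, Complex.conj_re, Complex.conj_im,
      Complex.one_im] at this
    linarith
  have K03 : a2 * d1 - a1 * d2 = 0 := by
    linear_combination (-(b1 * d1 + b2 * d2)) * E1 - (a1 * c1 + a2 * c2) * E2
      - (a2 * d1 - a1 * d2) * E3 + (a1 * d1 + a2 * d2) * E4
  have K12 : b2 * c1 - b1 * c2 = 0 := by linear_combination E4 - K03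
  have hcd : c1 ^ 2 + c2 ^ 2 + d1 ^ 2 + d2 ^ 2 ≠ 0 := by
    intro h
    have h1 : c1 = 0 := sq_eq_zero_iff.mp (le_antisymm (by linarith [sq_nonneg c2, sq_nonneg d1, sq_nonneg d2]) (sq_nonneg c1))
    have h2 : c2 = 0 := sq_eq_zero_iff.mp (le_antisymm (by linarith [sq_nonneg c1, sq_nonneg d1, sq_nonneg d2]) (sq_nonneg c2))
    have h3 : d1 = 0 := sq_eq_zero_iff.mp (le_antisymm (by linarith [sq_nonneg c1, sq_nonneg c2, sq_nonneg d2]) (sq_nonneg d1))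
    have h4 : d2 = 0 := sq_eq_zero_iff.mp (le_antisymm (by linarith [sq_nonneg c1, sq_nonneg c2, sq_nonneg d1]) (sq_nonneg d2))
    rw [h1, h2, h3, h4] at E3
    norm_num at E3
  have hab : a1 ^ 2 + a2 ^ 2 + b1 ^ 2 + b2 ^ 2 ≠ 0 := by
    intro h
    have h1 : a1 = 0 := sq_eq_zero_iff.mp (le_antisymm (by linarith [sq_nonneg a2, sq_nonneg b1, sq_nonneg b2]) (sq_nonneg a1))
    have h2 : a2 = 0 := sq_eq_zero_iff.mp (le_antisymm (by linarith [sq_nonneg a1, sq_nonneg b1, sq_nonneg b2]) (sq_nonneg a2))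
    have h3 : b1 = 0 := sq_eq_zero_iff.mp (le_antisymm (by linarith [sq_nonneg a1, sq_nonneg a2, sq_nonneg b2]) (sq_nonneg b1))
    have h4 : b2 = 0 := sq_eq_zero_iff.mp (le_antisymm (by linarith [sq_nonneg a1, sq_nonneg a2, sq_nonneg b1]) (sq_nonneg b2))
    rw [h1, h2, h3, h4] at E3
    norm_num at E3
  have K01 : a2 * b1 - a1 * b2 = 0 := by
    have hs : (c1 ^ 2 + c2 ^ 2 + d1 ^ 2 + d2 ^ 2) * (a2 * b1 - a1 * b2) = 0 := by
      linear_combination (b1 * c1 + b2 * c2) * E1 - (a1 * d1 + a2 * d2) * E2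
        + (b1 * d1 + b2 * d2) * K03 - (a1 * c1 + a2 * c2) * K12
    exact (mul_eq_zero.mp hs).resolve_left hcd
  have K23 : c2 * d1 - c1 * d2 = 0 := by
    have hs : (a1 ^ 2 + a2 ^ 2 + b1 ^ 2 + b2 ^ 2) * (c2 * d1 - c1 * d2) = 0 := by
      linear_combination (-(a1 * d1 + a2 * d2)) * E1 + (b1 * c1 + b2 * c2) * E2
        + (a1 * c1 + a2 * c2) * K03 - (b1 * d1 + b2 * d2) * K12
    exact (mul_eq_zero.mp hs).resolve_left hab
  intro j
  fin_cases j' <;> fin_cases j <;>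
    simp only [Fin.mk_zero, Fin.mk_one, show ((⟨2, by omega⟩ : Fin 4)) = 2 from rfl,
      show ((⟨3, by omega⟩ : Fin 4)) = 3 from rfl] <;>
    apply aux_ratio <;>
    first
      | linear_combination K01 | linear_combination -K01
      | linear_combination E1  | linear_combination -E1
      | linear_combination K03 | linear_combination -K03
      | linear_combination K12 | linear_combination -K12
      | linear_combination E2  | linear_combination -E2
      | linear_combination K23 | linear_combination -K23
      | ring
end

section
/- Let α = (α₁, α₂, α₃, α₄) ∈ ℂ⁴ belong to the class 𝒜. For all complex numbers u₁, u₂, v₁, v₂, set uΛ := α₁·u₁ + α₂·u₂, uΛ′ := α₃·u₁ + α₄·u₂, vΛ := α₁·v₁ + α₂·v₂, vΛ′ := α₃·v₁ + α₄·v₂. Then (conj(u₂)·v₁ − conj(u₁)·v₂) − (conj(uΛ′)·vΛ − conj(uΛ)·vΛ′) = 0. -/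
open ComplexConjugate

/-- Lemma 6 of the paper: if `(α₁, α₂, α₃, α₄)` belongs to the class 𝒜, and the
boundary values at `Λ` are obtained from those at `-Λ` by the boundary condition
BC(α), then the Wronskian defect vanishes. -/
theorem stmt5 (α₁ α₂ α₃ α₄ : ℂ)
    (hA1 : α₁ * conj α₄ - conj α₂ * α₃ = 1)
    (hA2a : (α₁ * conj α₃).im = 0) (hA2b : (α₂ * conj α₄).im = 0)
    (u₁ u₂ v₁ v₂ : ℂ) :
    (conj u₂ * v₁ - conj u₁ * v₂) -
      (conj (α₃ * u₁ + α₄ * u₂) * (α₁ * v₁ + α₂ * v₂) -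
       conj (α₁ * u₁ + α₂ * u₂) * (α₃ * v₁ + α₄ * v₂)) = 0 := by
  have h1 : conj α₁ * α₃ = α₁ * conj α₃ := by
    have := Complex.conj_eq_iff_im.mpr hA2a
    simpa [map_mul, mul_comm] using this
  have h2 : conj α₂ * α₄ = α₂ * conj α₄ := by
    have := Complex.conj_eq_iff_im.mpr hA2b
    simpa [map_mul, mul_comm] using this
  have h3 : conj α₁ * α₄ - α₂ * conj α₃ = 1 := by
    have := congrArg conj hA1
    simpa [map_mul, map_sub, mul_comm] using this
  simp only [map_add, map_mul]
  linear_combination (-(conj u₂ * v₁)) * hA1 + (conj u₁ * v₂) * h3 +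
    (conj u₁ * v₁) * h1 + (conj u₂ * v₂) * h2
end

section
/- Fix Λ > 0, θ_L, θ_R ∈ [0,π) ∪ (π,2π), and α_L, α_R ∈ ℝ, and set γ_L := e^{i(θ_L + √2·Λ)} and γ_R := e^{i(θ_R + √2·Λ)}. Then the following are equivalent: (i) for every c_L, c_R ∈ ℂ the function ψ := c_L·(L₊ + γ_L·L₋) + c_R·(R₊ + γ_R·R₋) satisfies ψ′(−Λ) = α_L·ψ(−Λ) and ψ′(Λ) = α_R·ψ(Λ), where the one-sided boundary values and derivatives are ψ(−Λ) = c_L·(L₊(−Λ) + γ_L·L₋(−Λ)), ψ′(−Λ) = c_L·(((1−i)/√2)·L₊(−Λ) + γ_L·((1+i)/√2)·L₋(−Λ)), ψ(Λ) = c_R·(R₊(Λ) + γ_R·R₋(Λ)), ψ′(Λ) = c_R·(((−1+i)/√2)·R₊(Λ) + γ_R·((−1−i)/√2)·R₋(Λ)); (ii) √2·(1 + cos θ_L)·α_L = 1 + cos θ_L − sin θ_L and √2·(1 + cos θ_R)·α_R = −(1 + cos θ_R − sin θ_R). -/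
open ComplexConjugate Real

/-- The normalization factor `N = 2^{1/4} e^{Λ/√2}` of the paper. -/
noncomputable def Nc (Λ : ℝ) : ℂ :=
  (((2 : ℝ) ^ ((1 : ℝ) / 4) * Real.exp (Λ / Real.sqrt 2) : ℝ) : ℂ)

/-- `L₊(x) = N e^{(1-i)x/√2}` for `x < -Λ`, and `0` beyond the junction. -/
noncomputable def Lp (Λ : ℝ) (x : ℝ) : ℂ :=
  if x < -Λ then Nc Λ * Complex.exp ((1 - Complex.I) * x / Real.sqrt 2) else 0

/-- `L₋(x) = N e^{(1+i)x/√2}` for `x < -Λ`, and `0` beyond the junction. -/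
noncomputable def Lm (Λ : ℝ) (x : ℝ) : ℂ :=
  if x < -Λ then Nc Λ * Complex.exp ((1 + Complex.I) * x / Real.sqrt 2) else 0

/-- `R₊(x) = N e^{(-1+i)x/√2}` for `x > Λ`, and `0` beyond the junction. -/
noncomputable def Rp (Λ : ℝ) (x : ℝ) : ℂ :=
  if Λ < x then Nc Λ * Complex.exp ((-1 + Complex.I) * x / Real.sqrt 2) else 0

/-- `R₋(x) = N e^{(-1-i)x/√2}` for `x > Λ`, and `0` beyond the junction. -/
noncomputable def Rm (Λ : ℝ) (x : ℝ) : ℂ :=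
  if Λ < x then Nc Λ * Complex.exp ((-1 - Complex.I) * x / Real.sqrt 2) else 0

/-- One-sided boundary value `L₊(-Λ) = N e^{-(1-i)Λ/√2}`. -/
noncomputable def LpB (Λ : ℝ) : ℂ := Nc Λ * Complex.exp (-((1 - Complex.I) * Λ) / Real.sqrt 2)

/-- One-sided boundary value `L₋(-Λ) = N e^{-(1+i)Λ/√2}`. -/
noncomputable def LmB (Λ : ℝ) : ℂ := Nc Λ * Complex.exp (-((1 + Complex.I) * Λ) / Real.sqrt 2)

/-- One-sided boundary value `R₊(Λ) = N e^{(-1+i)Λ/√2}`. -/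
noncomputable def RpB (Λ : ℝ) : ℂ := Nc Λ * Complex.exp ((-1 + Complex.I) * Λ / Real.sqrt 2)

/-- One-sided boundary value `R₋(Λ) = N e^{(-1-i)Λ/√2}`. -/
noncomputable def RmB (Λ : ℝ) : ℂ := Nc Λ * Complex.exp ((-1 - Complex.I) * Λ / Real.sqrt 2)

lemma cosne (θ : ℝ) (h : θ ∈ Set.Ico 0 π ∪ Set.Ioo π (2 * π)) : 1 + Real.cos θ ≠ 0 := by
  intro h0
  have hc : Real.cos θ = -1 := by linarith
  rw [Real.cos_eq_neg_one_iff] at hc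
  obtain ⟨k, hk⟩ := hc
  have hπ := Real.pi_pos
  rcases le_or_gt 0 k with hk0 | hk0
  · have : (0:ℝ) ≤ k := by exact_mod_cast hk0
    rcases h with ⟨h1, h2⟩ | ⟨h1, h2⟩
    · nlinarith
    · rcases le_or_gt (k:ℝ) 0 with hk1 | hk1
      · have : (k:ℝ) = 0 := le_antisymm hk1 this
        rw [this] at hk; nlinarith
      · have : (1:ℝ) ≤ k := by exact_mod_cast (by exact_mod_cast hk1 : (0:ℤ) < k)
        nlinarith
  · have : (k:ℝ) ≤ -1 := by exact_mod_cast (by omega : k ≤ -1)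
    rcases h with ⟨h1, h2⟩ | ⟨h1, h2⟩ <;> nlinarith

lemma hs2ne : ((Real.sqrt 2 : ℝ) : ℂ) ≠ 0 := by
  exact_mod_cast (Real.sqrt_pos.mpr (by norm_num)).ne'

lemma hs2sq : ((Real.sqrt 2 : ℝ) : ℂ) * ((Real.sqrt 2 : ℝ) : ℂ) = 2 := by
  exact_mod_cast congrArg (Complex.ofReal) (Real.mul_self_sqrt (by norm_num : (0:ℝ) ≤ 2))

lemma gammaL (Λ θ : ℝ) :
    Complex.exp (Complex.I * (θ + Real.sqrt 2 * Λ)) * LmB Λ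
      = Complex.exp (Complex.I * θ) * LpB Λ := by
  have harg : Complex.I * ((θ : ℂ) + (Real.sqrt 2 : ℝ) * Λ) + (-((1 + Complex.I) * Λ)) / (Real.sqrt 2 : ℝ)
      = Complex.I * (θ : ℂ) + (-((1 - Complex.I) * Λ)) / (Real.sqrt 2 : ℝ) := by
    have h := hs2sq
    field_simp
    ring_nf
    linear_combination (Complex.I * (Λ : ℂ)) * h
  unfold LmB LpB
  rw [mul_left_comm, ← Complex.exp_add, mul_left_comm, ← Complex.exp_add]
  push_cast
  rw [harg]

lemma gammaR (Λ θ : ℝ) :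
    Complex.exp (Complex.I * (θ + Real.sqrt 2 * Λ)) * RmB Λ
      = Complex.exp (Complex.I * θ) * RpB Λ := by
  have harg : Complex.I * ((θ : ℂ) + (Real.sqrt 2 : ℝ) * Λ) + ((-1 - Complex.I) * Λ) / (Real.sqrt 2 : ℝ)
      = Complex.I * (θ : ℂ) + ((-1 + Complex.I) * Λ) / (Real.sqrt 2 : ℝ) := by
    have h := hs2sq
    field_simp
    ring_nf
    linear_combination (Complex.I * (Λ : ℂ)) * h
  unfold RmB RpB
  rw [mul_left_comm, ← Complex.exp_add, mul_left_comm, ← Complex.exp_add]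
  push_cast
  rw [harg]

lemma LpBne (Λ : ℝ) : LpB Λ ≠ 0 := by
  unfold LpB Nc
  exact mul_ne_zero (by
    exact_mod_cast (mul_pos (Real.rpow_pos_of_pos (by norm_num) _) (Real.exp_pos _)).ne')
    (Complex.exp_ne_zero _)

lemma RpBne (Λ : ℝ) : RpB Λ ≠ 0 := by
  unfold RpB Nc
  exact mul_ne_zero (by
    exact_mod_cast (mul_pos (Real.rpow_pos_of_pos (by norm_num) _) (Real.exp_pos _)).ne')
    (Complex.exp_ne_zero _)

lemma core (c s α : ℝ) (hc : 1 + c ≠ 0) (hsc : s^2 + c^2 = 1) :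
    ((1 - Complex.I) / (Real.sqrt 2 : ℝ) + ((1 + Complex.I) / (Real.sqrt 2 : ℝ)) * (c + s * Complex.I)
      = (α : ℂ) * (1 + (c + s * Complex.I))) ↔
    Real.sqrt 2 * (1 + c) * α = 1 + c - s := by
  have hne := hs2ne
  have hsq := hs2sq
  rw [show (1 - Complex.I) / (Real.sqrt 2 : ℝ) + ((1 + Complex.I) / (Real.sqrt 2 : ℝ)) * (c + s * Complex.I)
      = ((1 - Complex.I) + (1 + Complex.I) * (c + s * Complex.I)) / (Real.sqrt 2 : ℝ) from by ring,
    div_eq_iff hne]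
  constructor
  · intro h
    have hre := congrArg Complex.re h
    simp [Complex.add_re, Complex.mul_re, Complex.mul_im, Complex.sub_re, Complex.add_im] at hre
    nlinarith [hre]
  · intro h
    have himag : Real.sqrt 2 * s * α = c + s - 1 := by
      apply mul_left_cancel₀ hc
      linear_combination s * h - hsc
    have hC := congrArg (fun x : ℝ => (x : ℂ)) h
    have hIC := congrArg (fun x : ℝ => (x : ℂ)) himag
    push_cast at hC hIC
    linear_combination (-1 : ℂ) * hC - Complex.I * hIC + (s : ℂ) * Complex.I_sq

lemma core2 (c s α : ℝ) (hc : 1 + c ≠ 0) (hsc : s^2 + c^2 = 1) :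
    ((-1 + Complex.I) / (Real.sqrt 2 : ℝ) + ((-1 - Complex.I) / (Real.sqrt 2 : ℝ)) * (c + s * Complex.I)
      = (α : ℂ) * (1 + (c + s * Complex.I))) ↔
    Real.sqrt 2 * (1 + c) * α = -(1 + c - s) := by
  have h := core c s (-α) hc hsc
  constructor
  · intro he
    have h2 : (1 - Complex.I) / (Real.sqrt 2 : ℝ) + ((1 + Complex.I) / (Real.sqrt 2 : ℝ)) * (c + s * Complex.I)
        = ((-α : ℝ) : ℂ) * (1 + (c + s * Complex.I)) := by
      push_cast
      linear_combination -he
    have := h.mp h2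
    linarith
  · intro he
    have h2 : Real.sqrt 2 * (1 + c) * (-α) = 1 + c - s := by linarith
    have := h.mpr h2
    push_cast at this
    linear_combination -this

lemma sideL (Λ θ α : ℝ) (γ : ℂ)
    (hγ : γ = Complex.exp (Complex.I * (θ + Real.sqrt 2 * Λ)))
    (hc : 1 + Real.cos θ ≠ 0) :
    (((1 - Complex.I) / (Real.sqrt 2 : ℝ)) * LpB Λ + γ * (((1 + Complex.I) / (Real.sqrt 2 : ℝ)) * LmB Λ)
      = (α : ℂ) * (LpB Λ + γ * LmB Λ)) ↔
    Real.sqrt 2 * (1 + Real.cos θ) * α = 1 + Real.cos θ - Real.sin θ := by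
  set z : ℂ := (Real.cos θ : ℂ) + (Real.sin θ : ℂ) * Complex.I with hzdef
  have hγm : γ * LmB Λ = z * LpB Λ := by
    rw [hγ, gammaL, mul_comm Complex.I, Complex.exp_mul_I, ← Complex.ofReal_cos,
      ← Complex.ofReal_sin]
  rw [show ((1 - Complex.I) / (Real.sqrt 2 : ℝ)) * LpB Λ + γ * (((1 + Complex.I) / (Real.sqrt 2 : ℝ)) * LmB Λ)
      = ((1 - Complex.I) / (Real.sqrt 2 : ℝ)) * LpB Λ + ((1 + Complex.I) / (Real.sqrt 2 : ℝ)) * (γ * LmB Λ) from by ring,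
    show (α : ℂ) * (LpB Λ + γ * LmB Λ) = (α : ℂ) * LpB Λ + (α : ℂ) * (γ * LmB Λ) from by ring,
    hγm,
    show ((1 - Complex.I) / (Real.sqrt 2 : ℝ)) * LpB Λ + ((1 + Complex.I) / (Real.sqrt 2 : ℝ)) * (z * LpB Λ)
      = ((1 - Complex.I) / (Real.sqrt 2 : ℝ) + ((1 + Complex.I) / (Real.sqrt 2 : ℝ)) * z) * LpB Λ from by ring,
    show (α : ℂ) * LpB Λ + (α : ℂ) * (z * LpB Λ) = ((α : ℂ) * (1 + z)) * LpB Λ from by ring,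
    (mul_left_injective₀ (LpBne Λ)).eq_iff]
  exact core _ _ _ hc (Real.sin_sq_add_cos_sq θ)

lemma sideR (Λ θ α : ℝ) (γ : ℂ)
    (hγ : γ = Complex.exp (Complex.I * (θ + Real.sqrt 2 * Λ)))
    (hc : 1 + Real.cos θ ≠ 0) :
    (((-1 + Complex.I) / (Real.sqrt 2 : ℝ)) * RpB Λ + γ * (((-1 - Complex.I) / (Real.sqrt 2 : ℝ)) * RmB Λ)
      = (α : ℂ) * (RpB Λ + γ * RmB Λ)) ↔
    Real.sqrt 2 * (1 + Real.cos θ) * α = -(1 + Real.cos θ - Real.sin θ) := by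
  set z : ℂ := (Real.cos θ : ℂ) + (Real.sin θ : ℂ) * Complex.I with hzdef
  have hγm : γ * RmB Λ = z * RpB Λ := by
    rw [hγ, gammaR, mul_comm Complex.I, Complex.exp_mul_I, ← Complex.ofReal_cos,
      ← Complex.ofReal_sin]
  rw [show ((-1 + Complex.I) / (Real.sqrt 2 : ℝ)) * RpB Λ + γ * (((-1 - Complex.I) / (Real.sqrt 2 : ℝ)) * RmB Λ)
      = ((-1 + Complex.I) / (Real.sqrt 2 : ℝ)) * RpB Λ + ((-1 - Complex.I) / (Real.sqrt 2 : ℝ)) * (γ * RmB Λ) from by ring,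
    show (α : ℂ) * (RpB Λ + γ * RmB Λ) = (α : ℂ) * RpB Λ + (α : ℂ) * (γ * RmB Λ) from by ring,
    hγm,
    show ((-1 + Complex.I) / (Real.sqrt 2 : ℝ)) * RpB Λ + ((-1 - Complex.I) / (Real.sqrt 2 : ℝ)) * (z * RpB Λ)
      = ((-1 + Complex.I) / (Real.sqrt 2 : ℝ) + ((-1 - Complex.I) / (Real.sqrt 2 : ℝ)) * z) * RpB Λ from by ring,
    show (α : ℂ) * RpB Λ + (α : ℂ) * (z * RpB Λ) = ((α : ℂ) * (1 + z)) * RpB Λ from by ring,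
    (mul_left_injective₀ (RpBne Λ)).eq_iff]
  exact core2 _ _ _ hc (Real.sin_sq_add_cos_sq θ)


/-- Lemma 1 of the paper: for `Λ > 0`, `θ_L, θ_R ∈ [0,π) ∪ (π,2π)`,
`α_L, α_R ∈ ℝ`, `γ_L = e^{i(θ_L+√2Λ)}`, `γ_R = e^{i(θ_R+√2Λ)}`, the Robin
boundary conditions hold for every `ψ = c_L(L₊+γ_L L₋) + c_R(R₊+γ_R R₋)`
iff `√2(1+cos θ)α = ±(1+cos θ - sin θ)` on each side. -/
theorem stmt6 (Λ : ℝ) (hΛ : 0 < Λ)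
    (θL θR : ℝ)
    (hθL : θL ∈ Set.Ico 0 π ∪ Set.Ioo π (2 * π))
    (hθR : θR ∈ Set.Ico 0 π ∪ Set.Ioo π (2 * π))
    (αL αR : ℝ)
    (γL γR : ℂ)
    (hγL : γL = Complex.exp (Complex.I * (θL + Real.sqrt 2 * Λ)))
    (hγR : γR = Complex.exp (Complex.I * (θR + Real.sqrt 2 * Λ))) :
    (∀ cL cR : ℂ,
      cL * (((1 - Complex.I) / Real.sqrt 2) * LpB Λ +
          γL * (((1 + Complex.I) / Real.sqrt 2) * LmB Λ)) =
        (αL : ℂ) * (cL * (LpB Λ + γL * LmB Λ)) ∧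
      cR * (((-1 + Complex.I) / Real.sqrt 2) * RpB Λ +
          γR * (((-1 - Complex.I) / Real.sqrt 2) * RmB Λ)) =
        (αR : ℂ) * (cR * (RpB Λ + γR * RmB Λ))) ↔
    (Real.sqrt 2 * (1 + Real.cos θL) * αL = 1 + Real.cos θL - Real.sin θL ∧
     Real.sqrt 2 * (1 + Real.cos θR) * αR = -(1 + Real.cos θR - Real.sin θR)) := by
  have hL := sideL Λ θL αL γL hγL (cosne θL hθL)
  have hR := sideR Λ θR αR γR hγR (cosne θR hθR)
  constructor
  · intro h
    obtain ⟨h1, h2⟩ := h 1 1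
    simp only [one_mul] at h1 h2
    exact ⟨hL.mp h1, hR.mp h2⟩
  · rintro ⟨h1, h2⟩ cL cR
    have e1 := hL.mpr h1
    have e2 := hR.mpr h2
    constructor
    · calc cL * (((1 - Complex.I) / Real.sqrt 2) * LpB Λ + γL * (((1 + Complex.I) / Real.sqrt 2) * LmB Λ))
          = cL * ((αL : ℂ) * (LpB Λ + γL * LmB Λ)) := by rw [e1]
        _ = (αL : ℂ) * (cL * (LpB Λ + γL * LmB Λ)) := by ring
    · calc cR * (((-1 + Complex.I) / Real.sqrt 2) * RpB Λ + γR * (((-1 - Complex.I) / Real.sqrt 2) * RmB Λ))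
          = cR * ((αR : ℂ) * (RpB Λ + γR * RmB Λ)) := by rw [e2]
        _ = (αR : ℂ) * (cR * (RpB Λ + γR * RmB Λ)) := by ring
end

section
/- Fix Λ > 0 and let Ω_Λ := (−∞,−Λ) ∪ (Λ,∞). Let ψ : ℝ → ℂ be twice differentiable at every point of Ω_Λ, square integrable on Ω_Λ, and satisfy −ψ″(x) = i·ψ(x) for all x ∈ Ω_Λ. Then there exist complex numbers c_L, c_R such that ψ(x) = c_L·L₊(x) + c_R·R₊(x) for all x ∈ Ω_Λ. Similarly, if instead −ψ″(x) = −i·ψ(x) for all x ∈ Ω_Λ, then there exist c_L, c_R ∈ ℂ with ψ(x) = c_L·L₋(x) + c_R·R₋(x) for all x ∈ Ω_Λ. -/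
open ComplexConjugate Real

section Helpers
open MeasureTheory Set Filter

lemma expDeriv (c : ℂ) (x : ℝ) :
    HasDerivAt (fun y : ℝ => Complex.exp (c * y)) (c * Complex.exp (c * x)) x := by
  have h : HasDerivAt (fun z : ℂ => Complex.exp (c * z)) (c * Complex.exp (c * x)) (x : ℂ) := by
    simpa [mul_comm] using ((hasDerivAt_id (x:ℂ)).const_mul c).cexp
  exact h.comp_ofReal

lemma constOn {s : Set ℝ} (hs : Convex ℝ s) {f : ℝ → ℂ}
    (hf : ∀ x ∈ s, HasDerivAt f 0 x) {x y : ℝ} (hx : x ∈ s) (hy : y ∈ s) : f x = f y := by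
  have h := hs.norm_image_sub_le_of_norm_hasDerivWithin_le (f' := fun _ => (0:ℂ)) (C := 0)
    (fun z hz => (hf z hz).hasDerivWithinAt) (fun z hz => by simp) hy hx
  have h1 : ‖f x - f y‖ ≤ 0 := by simpa using h
  have h2 := le_antisymm h1 (norm_nonneg _)
  rwa [norm_eq_zero, sub_eq_zero] at h2

lemma ode_solve (μ : ℂ) (hμ : μ ≠ 0) (s : Set ℝ) (hconv : Convex ℝ s)
    (hne : s.Nonempty) (ψ : ℝ → ℂ)
    (hdiff : ∀ x ∈ s, DifferentiableAt ℝ ψ x ∧ DifferentiableAt ℝ (deriv ψ) x)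
    (hode : ∀ x ∈ s, deriv (deriv ψ) x = μ ^ 2 * ψ x) :
    ∃ A B : ℂ, ∀ x ∈ s, ψ x = A * Complex.exp (μ * x) + B * Complex.exp (-(μ * x)) := by
  obtain ⟨x₀, hx₀⟩ := hne
  set g : ℝ → ℂ := fun x => (deriv ψ x + μ * ψ x) * Complex.exp (-(μ * x)) with hg
  set h : ℝ → ℂ := fun x => (deriv ψ x - μ * ψ x) * Complex.exp (μ * x) with hh
  have hgd : ∀ x ∈ s, HasDerivAt g 0 x := by
    intro x hx
    have h1 : HasDerivAt (fun y => deriv ψ y + μ * ψ y)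
        (μ ^ 2 * ψ x + μ * deriv ψ x) x := by
      have := ((hdiff x hx).2.hasDerivAt.add (((hdiff x hx).1.hasDerivAt).const_mul μ))
      rwa [hode x hx] at this
    have h2 : HasDerivAt (fun y : ℝ => Complex.exp (-(μ * y))) (-μ * Complex.exp (-(μ * x))) x := by
      simpa [neg_mul] using expDeriv (-μ) x
    have h3 := h1.mul h2
    show HasDerivAt (fun y => (deriv ψ y + μ * ψ y) * Complex.exp (-(μ * y))) 0 x
    exact h3.congr_deriv (by ring)
  have hhd : ∀ x ∈ s, HasDerivAt h 0 x := by
    intro x hx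
    have h1 : HasDerivAt (fun y => deriv ψ y - μ * ψ y)
        (μ ^ 2 * ψ x - μ * deriv ψ x) x := by
      have := ((hdiff x hx).2.hasDerivAt.sub (((hdiff x hx).1.hasDerivAt).const_mul μ))
      rwa [hode x hx] at this
    have h3 := h1.mul (expDeriv μ x)
    show HasDerivAt (fun y => (deriv ψ y - μ * ψ y) * Complex.exp (μ * y)) 0 x
    exact h3.congr_deriv (by ring)
  have h2μ : (2 : ℂ) * μ ≠ 0 := by simp [hμ]
  refine ⟨(2 * μ)⁻¹ * g x₀, -((2 * μ)⁻¹ * h x₀), fun x hx => ?_⟩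
  have hgc : g x = g x₀ := constOn hconv hgd hx hx₀
  have hhc : h x = h x₀ := constOn hconv hhd hx hx₀
  have e1 : Complex.exp (-(μ * x)) * Complex.exp (μ * x) = 1 := by
    rw [← Complex.exp_add]; simp
  have key : g x * Complex.exp (μ * x) - h x * Complex.exp (-(μ * x)) = 2 * μ * ψ x := by
    rw [hg, hh]
    linear_combination (2 * μ * ψ x) * e1
  rw [← hgc, ← hhc]
  calc ψ x = (2 * μ)⁻¹ * (2 * μ * ψ x) := by field_simp
    _ = (2 * μ)⁻¹ * (g x * Complex.exp (μ * x) - h x * Complex.exp (-(μ * x))) := by rw [key]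
    _ = (2 * μ)⁻¹ * g x * Complex.exp (μ * x) + -((2 * μ)⁻¹ * h x) * Complex.exp (-(μ * x)) := by ring


lemma normAexp (A μ : ℂ) (x : ℝ) : ‖A * Complex.exp (μ * x)‖ = ‖A‖ * Real.exp (μ.re * x) := by
  rw [norm_mul, Complex.norm_exp]
  norm_num [Complex.mul_re]

lemma lower_bound (A B μ : ℂ) (ψ : ℝ → ℂ) (x : ℝ)
    (h : ψ x = A * Complex.exp (μ * x) + B * Complex.exp (-(μ * x))) :
    ‖A‖ * Real.exp (μ.re * x) - ‖B‖ * Real.exp (-(μ.re * x)) ≤ ‖ψ x‖ := by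
  have h1 : ‖A * Complex.exp (μ * x)‖ ≤ ‖ψ x‖ + ‖B * Complex.exp (-(μ * x))‖ := by
    rw [h]
    have := norm_add_le (A * Complex.exp (μ * x) + B * Complex.exp (-(μ * x))) (-(B * Complex.exp (-(μ * x))))
    simpa using this
  have e1 := normAexp A μ x
  have e2 : ‖B * Complex.exp (-(μ * x))‖ = ‖B‖ * Real.exp (-(μ.re * x)) := by
    have := normAexp B (-μ) x
    simpa [neg_mul] using this
  rw [e1, e2] at h1
  linarith

lemma not_int (a : ℝ) (f : ℝ → ℝ) (hf : IntegrableOn f (Ioi a))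
    (M : ℝ) (hM : ∀ x, M < x → 1 ≤ f x) : False := by
  have hfin : volume.restrict (Ioi a) {x | 1 ≤ f x} < ⊤ :=
    hf.measure_ge_lt_top one_pos
  have hsub : Ioi (max a M) ⊆ {x | 1 ≤ f x} := fun x hx =>
    hM x (lt_of_le_of_lt (le_max_right a M) hx)
  have htop : volume.restrict (Ioi a) (Ioi (max a M)) = ⊤ := by
    rw [Measure.restrict_apply measurableSet_Ioi,
      inter_eq_self_of_subset_left (Ioi_subset_Ioi (le_max_left a M))]
    exact Real.volume_Ioi
  exact absurd (le_trans htop.ge (measure_mono hsub)) (by simpa using hfin.ne)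

lemma not_int' (a : ℝ) (f : ℝ → ℝ) (hf : IntegrableOn f (Iio a))
    (M : ℝ) (hM : ∀ x, x < M → 1 ≤ f x) : False := by
  have hfin : volume.restrict (Iio a) {x | 1 ≤ f x} < ⊤ :=
    hf.measure_ge_lt_top one_pos
  have hsub : Iio (min a M) ⊆ {x | 1 ≤ f x} := fun x hx =>
    hM x (lt_of_lt_of_le hx (min_le_right a M))
  have htop : volume.restrict (Iio a) (Iio (min a M)) = ⊤ := by
    rw [Measure.restrict_apply measurableSet_Iio,
      inter_eq_self_of_subset_left (Iio_subset_Iio (min_le_left a M))]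
    exact Real.volume_Iio
  exact absurd (le_trans htop.ge (measure_mono hsub)) (by simpa using hfin.ne)

lemma kill_Ioi (a : ℝ) (μ A B : ℂ) (hre : 0 < μ.re) (ψ : ℝ → ℂ)
    (hL2 : IntegrableOn (fun x => ‖ψ x‖ ^ 2) (Ioi a))
    (hψ : ∀ x ∈ Ioi a, ψ x = A * Complex.exp (μ * x) + B * Complex.exp (-(μ * x))) :
    A = 0 := by
  by_contra hA
  have hnA : 0 < ‖A‖ := norm_pos_iff.mpr hA
  have t1 : Tendsto (fun x : ℝ => μ.re * x) atTop atTop := tendsto_id.const_mul_atTop hre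
  have t3 : Tendsto (fun x : ℝ => ‖A‖ * Real.exp (μ.re * x)) atTop atTop :=
    (Real.tendsto_exp_atTop.comp t1).const_mul_atTop hnA
  have t4 : Tendsto (fun x : ℝ => -(‖B‖ * Real.exp (-(μ.re * x)))) atTop (nhds 0) := by
    have h0 : Tendsto (fun x : ℝ => Real.exp (-(μ.re * x))) atTop (nhds 0) :=
      Real.tendsto_exp_atBot.comp (tendsto_neg_atTop_atBot.comp t1)
    simpa using (h0.const_mul ‖B‖).neg
  have hT : Tendsto (fun x : ℝ => ‖A‖ * Real.exp (μ.re * x) - ‖B‖ * Real.exp (-(μ.re * x)))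
      atTop atTop := by
    simpa [sub_eq_add_neg] using t3.atTop_add t4
  obtain ⟨M, hM⟩ := (hT.eventually_ge_atTop 1).exists_forall_of_atTop
  apply not_int a _ hL2 (max a M)
  intro x hx
  have hxa : x ∈ Ioi a := lt_of_le_of_lt (le_max_left a M) hx
  have h1 : 1 ≤ ‖ψ x‖ :=
    le_trans (hM x (le_of_lt (lt_of_le_of_lt (le_max_right a M) hx)))
      (lower_bound A B μ ψ x (hψ x hxa))
  nlinarith [norm_nonneg (ψ x)]

lemma kill_Iio (a : ℝ) (μ A B : ℂ) (hre : 0 < μ.re) (ψ : ℝ → ℂ)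
    (hL2 : IntegrableOn (fun x => ‖ψ x‖ ^ 2) (Iio a))
    (hψ : ∀ x ∈ Iio a, ψ x = A * Complex.exp (μ * x) + B * Complex.exp (-(μ * x))) :
    B = 0 := by
  by_contra hB
  have hnB : 0 < ‖B‖ := norm_pos_iff.mpr hB
  have t1 : Tendsto (fun x : ℝ => μ.re * x) atBot atBot := tendsto_id.const_mul_atBot hre
  have t3 : Tendsto (fun x : ℝ => ‖B‖ * Real.exp (-(μ.re * x))) atBot atTop :=
    (Real.tendsto_exp_atTop.comp (tendsto_neg_atBot_atTop.comp t1)).const_mul_atTop hnB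
  have t4 : Tendsto (fun x : ℝ => -(‖A‖ * Real.exp (μ.re * x))) atBot (nhds 0) := by
    have h0 : Tendsto (fun x : ℝ => Real.exp (μ.re * x)) atBot (nhds 0) :=
      Real.tendsto_exp_atBot.comp t1
    simpa using (h0.const_mul ‖A‖).neg
  have hT : Tendsto (fun x : ℝ => ‖B‖ * Real.exp (-(μ.re * x)) - ‖A‖ * Real.exp (μ.re * x))
      atBot atTop := by
    simpa [sub_eq_add_neg] using t3.atTop_add t4
  obtain ⟨M, hM⟩ := (hT.eventually_ge_atTop 1).exists_forall_of_atBot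
  apply not_int' a _ hL2 (min a M)
  intro x hx
  have hxa : x ∈ Iio a := lt_of_lt_of_le hx (min_le_left a M)
  have hlow : ‖B‖ * Real.exp (-(μ.re * x)) - ‖A‖ * Real.exp (μ.re * x) ≤ ‖ψ x‖ := by
    have h2 : ψ x = B * Complex.exp ((-μ) * x) + A * Complex.exp (-((-μ) * x)) := by
      rw [hψ x hxa]; ring_nf
    have := lower_bound B A (-μ) ψ x h2
    simpa [neg_mul, neg_neg] using this
  have h1 : 1 ≤ ‖ψ x‖ :=
    le_trans (hM x (le_of_lt (lt_of_lt_of_le hx (min_le_right a M)))) hlow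
  nlinarith [norm_nonneg (ψ x)]

lemma assemble (Λ : ℝ) (hΛ : 0 < Λ) (μ : ℂ) (hre : 0 < μ.re) (ψ : ℝ → ℂ)
    (hdiff : ∀ x ∈ Set.Iio (-Λ) ∪ Set.Ioi Λ,
      DifferentiableAt ℝ ψ x ∧ DifferentiableAt ℝ (deriv ψ) x)
    (hL2 : MeasureTheory.IntegrableOn (fun x => ‖ψ x‖ ^ 2) (Set.Iio (-Λ) ∪ Set.Ioi Λ))
    (hode : ∀ x ∈ Set.Iio (-Λ) ∪ Set.Ioi Λ, deriv (deriv ψ) x = μ ^ 2 * ψ x) :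
    ∃ cL cR : ℂ, ∀ x ∈ Set.Iio (-Λ) ∪ Set.Ioi Λ,
      ψ x = cL * (if x < -Λ then Complex.exp (μ * x) else 0)
          + cR * (if Λ < x then Complex.exp (-(μ * x)) else 0) := by
  have hμ : μ ≠ 0 := fun h => by simp [h] at hre
  obtain ⟨A, B, hAB⟩ := ode_solve μ hμ (Iio (-Λ)) (convex_Iio _) ⟨-Λ - 1, by simp⟩ ψ
    (fun x hx => hdiff x (Or.inl hx)) (fun x hx => hode x (Or.inl hx))
  obtain ⟨A', B', hAB'⟩ := ode_solve μ hμ (Ioi Λ) (convex_Ioi _) ⟨Λ + 1, by simp⟩ ψ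
    (fun x hx => hdiff x (Or.inr hx)) (fun x hx => hode x (Or.inr hx))
  have hB : B = 0 := kill_Iio (-Λ) μ A B hre ψ (hL2.mono_set subset_union_left) hAB
  have hA' : A' = 0 := kill_Ioi Λ μ A' B' hre ψ (hL2.mono_set subset_union_right) hAB'
  refine ⟨A, B', fun x hx => ?_⟩
  rcases hx with hx | hx
  · have hx' : x < -Λ := hx
    have hnx : ¬ Λ < x := by simp only [Set.mem_Iio] at hx; intro h; linarith
    rw [if_pos hx', if_neg hnx, hAB x hx, hB]
    ring
  · have hx' : Λ < x := hx
    have hnx : ¬ x < -Λ := by simp only [Set.mem_Ioi] at hx; intro h; linarith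
    rw [if_neg hnx, if_pos hx', hAB' x hx, hA']
    ring

end Helpers

/-- The deficiency subspaces are spanned by `L₊, R₊` (eigenvalue `i`) and by
`L₋, R₋` (eigenvalue `-i`): any `ψ` twice differentiable on
`Ω_Λ = (-∞,-Λ) ∪ (Λ,∞)`, square integrable on `Ω_Λ`, and satisfying
`-ψ'' = ±iψ` on `Ω_Λ` is a linear combination of `L±, R±` on `Ω_Λ`. -/
theorem stmt10 (Λ : ℝ) (hΛ : 0 < Λ) (ψ : ℝ → ℂ)
    (hdiff : ∀ x ∈ Set.Iio (-Λ) ∪ Set.Ioi Λ,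
      DifferentiableAt ℝ ψ x ∧ DifferentiableAt ℝ (deriv ψ) x)
    (hL2 : MeasureTheory.IntegrableOn (fun x => ‖ψ x‖ ^ 2)
      (Set.Iio (-Λ) ∪ Set.Ioi Λ)) :
    ((∀ x ∈ Set.Iio (-Λ) ∪ Set.Ioi Λ, -(deriv (deriv ψ) x) = Complex.I * ψ x) →
      ∃ cL cR : ℂ, ∀ x ∈ Set.Iio (-Λ) ∪ Set.Ioi Λ,
        ψ x = cL * Lp Λ x + cR * Rp Λ x) ∧
    ((∀ x ∈ Set.Iio (-Λ) ∪ Set.Ioi Λ, -(deriv (deriv ψ) x) = -Complex.I * ψ x) →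
      ∃ cL cR : ℂ, ∀ x ∈ Set.Iio (-Λ) ∪ Set.Ioi Λ,
        ψ x = cL * Lm Λ x + cR * Rm Λ x) := by
  have hs2 : (0:ℝ) < Real.sqrt 2 := Real.sqrt_pos.mpr (by norm_num)
  have hsq : ((Real.sqrt 2 : ℝ) : ℂ) ^ 2 = 2 := by
    rw [← Complex.ofReal_pow, Real.sq_sqrt (by norm_num : (0:ℝ) ≤ 2)]
    norm_num
  have hNc : Nc Λ ≠ 0 := by
    unfold Nc; rw [Complex.ofReal_ne_zero]; positivity
  constructor
  · intro h
    set μ : ℂ := (1 - Complex.I) / (Real.sqrt 2 : ℂ) with hμdef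
    have hre : 0 < μ.re := by
      rw [hμdef, Complex.div_ofReal_re]
      simp only [Complex.sub_re, Complex.one_re, Complex.I_re, sub_zero]
      positivity
    have hμ2 : μ ^ 2 = -Complex.I := by
      rw [hμdef, div_pow, hsq, div_eq_iff (by norm_num : (2:ℂ) ≠ 0)]
      linear_combination Complex.I_sq
    have hode' : ∀ x ∈ Set.Iio (-Λ) ∪ Set.Ioi Λ, deriv (deriv ψ) x = μ ^ 2 * ψ x := by
      intro x hx; rw [hμ2]; linear_combination -(h x hx)
    obtain ⟨cL, cR, hc⟩ := assemble Λ hΛ μ hre ψ hdiff hL2 hode'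
    refine ⟨cL / Nc Λ, cR / Nc Λ, fun x hx => ?_⟩
    have eL : (1 - Complex.I) * (x:ℂ) / (Real.sqrt 2 : ℂ) = μ * x := by rw [hμdef]; ring
    have eR : (-1 + Complex.I) * (x:ℂ) / (Real.sqrt 2 : ℂ) = -(μ * x) := by rw [hμdef]; ring
    rw [hc x hx]
    rcases hx with hx1 | hx1
    · have h1 : x < -Λ := hx1
      have h2 : ¬ Λ < x := by simp only [Set.mem_Iio] at hx1; intro hcon; linarith
      unfold Lp Rp
      rw [if_pos h1, if_pos h1, if_neg h2, if_neg h2, eL]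
      field_simp
      ring
    · have h1 : Λ < x := hx1
      have h2 : ¬ x < -Λ := by simp only [Set.mem_Ioi] at hx1; intro hcon; linarith
      unfold Lp Rp
      rw [if_pos h1, if_pos h1, if_neg h2, if_neg h2, eR]
      field_simp
      ring
  · intro h
    set μ : ℂ := (1 + Complex.I) / (Real.sqrt 2 : ℂ) with hμdef
    have hre : 0 < μ.re := by
      rw [hμdef, Complex.div_ofReal_re]
      simp only [Complex.add_re, Complex.one_re, Complex.I_re, add_zero]
      positivity
    have hμ2 : μ ^ 2 = Complex.I := by
      rw [hμdef, div_pow, hsq, div_eq_iff (by norm_num : (2:ℂ) ≠ 0)]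
      linear_combination Complex.I_sq
    have hode' : ∀ x ∈ Set.Iio (-Λ) ∪ Set.Ioi Λ, deriv (deriv ψ) x = μ ^ 2 * ψ x := by
      intro x hx; rw [hμ2]; linear_combination -(h x hx)
    obtain ⟨cL, cR, hc⟩ := assemble Λ hΛ μ hre ψ hdiff hL2 hode'
    refine ⟨cL / Nc Λ, cR / Nc Λ, fun x hx => ?_⟩
    have eL : (1 + Complex.I) * (x:ℂ) / (Real.sqrt 2 : ℂ) = μ * x := by rw [hμdef]; ring
    have eR : (-1 - Complex.I) * (x:ℂ) / (Real.sqrt 2 : ℂ) = -(μ * x) := by rw [hμdef]; ring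
    rw [hc x hx]
    rcases hx with hx1 | hx1
    · have h1 : x < -Λ := hx1
      have h2 : ¬ Λ < x := by simp only [Set.mem_Iio] at hx1; intro hcon; linarith
      unfold Lm Rm
      rw [if_pos h1, if_pos h1, if_neg h2, if_neg h2, eL]
      field_simp
      ring
    · have h1 : Λ < x := hx1
      have h2 : ¬ x < -Λ := by simp only [Set.mem_Ioi] at hx1; intro hcon; linarith
      unfold Lm Rm
      rw [if_pos h1, if_pos h1, if_neg h2, if_neg h2, eR]
      field_simp
      ring
end

section
/- Fix Λ > 0, unimodular γ_→, γ_← ∈ ℂ, and α₁, α₂, α₃, α₄ ∈ ℂ with α₁ + α₂·e^{iπ/4} ≠ 0, α₁ + α₂·e^{−iπ/4} ≠ 0, α₃ + α₄·e^{iπ/4} ≠ 0, and α₃ + α₄·e^{−iπ/4} ≠ 0. Then the following are equivalent: (i) for all c_L, c_R ∈ ℂ, the function ψ := c_L·f + c_R·g (with boundary values ψ(∓Λ), ψ′(∓Λ) given by the corresponding linear combinations of the boundary values of f and g) satisfies ψ(Λ) = α₁·ψ(−Λ) + α₂·ψ′(−Λ) and ψ′(Λ) = α₃·ψ(−Λ)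 + α₄·ψ′(−Λ); (ii) γ_→ = (α₁ + α₂·e^{−iπ/4})·e^{i√2Λ} = (α₃ + α₄·e^{−iπ/4})·e^{3iπ/4}·e^{i√2Λ} and γ_← = (α₁ + α₂·e^{iπ/4})⁻¹·e^{i√2Λ} = (α₃ + α₄·e^{iπ/4})⁻¹·e^{3iπ/4}·e^{i√2Λ}. -/
open ComplexConjugate Real

lemma tun_sq2 : (Real.sqrt 2 : ℂ) * (Real.sqrt 2 : ℂ) = 2 := by
  rw [← Complex.ofReal_mul, Real.mul_self_sqrt (by norm_num)]
  norm_num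

lemma tun_key1 (Λ : ℝ) :
    Complex.exp (-((1 - Complex.I) * Λ) / Real.sqrt 2) =
    Complex.exp ((-1 - Complex.I) * Λ / Real.sqrt 2) *
      Complex.exp (Complex.I * (Real.sqrt 2 * Λ)) := by
  rw [← Complex.exp_add]
  congr 1
  have h : (Real.sqrt 2 : ℂ) ≠ 0 := by simp [Real.sqrt_eq_zero']
  field_simp
  linear_combination (- Complex.I * (Λ:ℂ)) * tun_sq2

lemma tun_key2 (Λ : ℝ) :
    Complex.exp ((-1 + Complex.I) * Λ / Real.sqrt 2) =
    Complex.exp (-((1 + Complex.I) * Λ) / Real.sqrt 2) *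
      Complex.exp (Complex.I * (Real.sqrt 2 * Λ)) := by
  rw [← Complex.exp_add]
  congr 1
  have h : (Real.sqrt 2 : ℂ) ≠ 0 := by simp [Real.sqrt_eq_zero']
  field_simp
  linear_combination (- Complex.I * (Λ:ℂ)) * tun_sq2

/-- Lemma 7 of the paper: the tunneling boundary condition `BC(α₁,α₂,α₃,α₄)`
holds for all `ψ = c_L f + c_R g` iff the unitary parameters `γ_→, γ_←`
are given by the stated formulas. -/
theorem stmt12 (Λ : ℝ) (hΛ : 0 < Λ) (γr γl : ℂ)
    (hγr : ‖γr‖ = 1) (hγl : ‖γl‖ = 1)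
    (α₁ α₂ α₃ α₄ : ℂ)
    (h12p : α₁ + α₂ * Complex.exp (Complex.I * (π / 4)) ≠ 0)
    (h12m : α₁ + α₂ * Complex.exp (-(Complex.I * (π / 4))) ≠ 0)
    (h34p : α₃ + α₄ * Complex.exp (Complex.I * (π / 4)) ≠ 0)
    (h34m : α₃ + α₄ * Complex.exp (-(Complex.I * (π / 4))) ≠ 0)
    (fBm fBm' fBp fBp' gBm gBm' gBp gBp' : ℂ)
    (hfBm : fBm = LpB Λ)
    (hfBm' : fBm' = Complex.exp (-(Complex.I * (π / 4))) * LpB Λ)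
    (hfBp : fBp = γr * RmB Λ)
    (hfBp' : fBp' = Complex.exp (-(Complex.I * (3 * π / 4))) * (γr * RmB Λ))
    (hgBm : gBm = γl * LmB Λ)
    (hgBm' : gBm' = Complex.exp (Complex.I * (π / 4)) * (γl * LmB Λ))
    (hgBp : gBp = RpB Λ)
    (hgBp' : gBp' = Complex.exp (Complex.I * (3 * π / 4)) * RpB Λ) :
    (∀ cL cR : ℂ,
      cL * fBp + cR * gBp =
        α₁ * (cL * fBm + cR * gBm) + α₂ * (cL * fBm' + cR * gBm') ∧
      cL * fBp' + cR * gBp' =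
        α₃ * (cL * fBm + cR * gBm) + α₄ * (cL * fBm' + cR * gBm')) ↔
    (γr = (α₁ + α₂ * Complex.exp (-(Complex.I * (π / 4)))) *
        Complex.exp (Complex.I * (Real.sqrt 2 * Λ)) ∧
     (α₁ + α₂ * Complex.exp (-(Complex.I * (π / 4)))) *
        Complex.exp (Complex.I * (Real.sqrt 2 * Λ)) =
       (α₃ + α₄ * Complex.exp (-(Complex.I * (π / 4)))) *
        Complex.exp (Complex.I * (3 * π / 4)) *
        Complex.exp (Complex.I * (Real.sqrt 2 * Λ)) ∧
     γl = (α₁ + α₂ * Complex.exp (Complex.I * (π / 4)))⁻¹ *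
        Complex.exp (Complex.I * (Real.sqrt 2 * Λ)) ∧
     (α₁ + α₂ * Complex.exp (Complex.I * (π / 4)))⁻¹ *
        Complex.exp (Complex.I * (Real.sqrt 2 * Λ)) =
       (α₃ + α₄ * Complex.exp (Complex.I * (π / 4)))⁻¹ *
        Complex.exp (Complex.I * (3 * π / 4)) *
        Complex.exp (Complex.I * (Real.sqrt 2 * Λ))) := by
  subst hfBm hfBm' hfBp hfBp' hgBm hgBm' hgBp hgBp'
  have hN : Nc Λ ≠ 0 := by
    unfold Nc
    exact_mod_cast
      (by positivity : (0:ℝ) < (2:ℝ) ^ ((1:ℝ)/4) * Real.exp (Λ / Real.sqrt 2)).ne'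
  have hRm : RmB Λ ≠ 0 := mul_ne_zero hN (Complex.exp_ne_zero _)
  have hLm : LmB Λ ≠ 0 := mul_ne_zero hN (Complex.exp_ne_zero _)
  set E := Complex.exp (Complex.I * (Real.sqrt 2 * Λ)) with hEdef
  set v := Complex.exp (Complex.I * (3 * π / 4)) with hvdef
  set u := Complex.exp (-(Complex.I * (3 * π / 4))) with hudef
  set ep := Complex.exp (Complex.I * (π / 4)) with hepdef
  set em := Complex.exp (-(Complex.I * (π / 4))) with hemdef
  have huv : u * v = 1 := by
    rw [hudef, hvdef, ← Complex.exp_add]; simp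
  have hLpE : LpB Λ = RmB Λ * E := by
    rw [LpB, RmB, tun_key1, hEdef]; ring
  have hRpE : RpB Λ = LmB Λ * E := by
    rw [RpB, LmB, tun_key2, hEdef]; ring
  constructor
  · intro h
    obtain ⟨hA, hC⟩ := h 1 0
    obtain ⟨hB, hD⟩ := h 0 1
    simp only [one_mul, zero_mul, add_zero, zero_add] at hA hB hC hD
    rw [hLpE] at hA hC
    rw [hRpE] at hB hD
    have hga : γr = (α₁ + α₂ * em) * E :=
      mul_right_cancel₀ hRm (by linear_combination hA)
    have hgc : γr = (α₃ + α₄ * em) * v * E :=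
      mul_right_cancel₀ hRm (by linear_combination v * hC - γr * RmB Λ * huv)
    have hgb : (α₁ + α₂ * ep) * γl = E :=
      mul_right_cancel₀ hLm (by linear_combination -hB)
    have hgd : (α₃ + α₄ * ep) * γl = v * E :=
      mul_right_cancel₀ hLm (by linear_combination -hD)
    refine ⟨hga, hga.symm.trans hgc, ?_, ?_⟩
    · rw [inv_mul_eq_div, eq_div_iff h12p]
      linear_combination hgb
    · linear_combination -(α₁ + α₂ * ep)⁻¹ * hgb + (α₃ + α₄ * ep)⁻¹ * hgd +
        γl * mul_inv_cancel₀ h12p - γl * mul_inv_cancel₀ h34p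
  · rintro ⟨h1, h2, h3, h4⟩ cL cR
    have hγl1 : (α₁ + α₂ * ep) * γl = E := by
      rw [h3]; field_simp
    have hγl2 : (α₃ + α₄ * ep) * γl = v * E := by
      rw [h3, h4]; field_simp
    have hgc' : γr = (α₃ + α₄ * em) * v * E := h1.trans h2
    constructor
    · linear_combination cL * RmB Λ * h1 + cR * hRpE -
        cL * (α₁ + α₂ * em) * hLpE - cR * LmB Λ * hγl1
    · linear_combination cL * u * RmB Λ * hgc' +
        cL * (α₃ + α₄ * em) * E * RmB Λ * huv -
        cL * (α₃ + α₄ * em) * hLpE + cR * v * hRpE - cR * LmB Λ * hγl2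
end

section
/- Fix Λ > 0 and θ ∈ [0,2π), and set γ_→ := e^{i(θ + √2Λ + 3π/4)} and γ_← := e^{i(−θ + √2Λ + 3π/4)}. For α₂, α₃ ∈ ℂ, the following are equivalent: (i) for all c_L, c_R ∈ ℂ, the function ψ := c_L·f + c_R·g (with boundary values given by the corresponding linear combinations of the boundary values of f and g) satisfies ψ(Λ) = α₂·ψ′(−Λ) and ψ′(Λ) = α₃·ψ(−Λ); (ii) α₂ = −e^{iθ} and α₃ = e^{iθ}. -/
open ComplexConjugate Real

lemma exp_shift_pi (a b : ℂ) (h : a = b + ↑π * Complex.I) :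
    Complex.exp a = -Complex.exp b := by
  rw [h, Complex.exp_add, Complex.exp_pi_mul_I]; ring

/-- Theorem 2 of the paper: with `γ_→ = e^{i(θ+√2Λ+3π/4)}` and
`γ_← = e^{i(-θ+√2Λ+3π/4)}`, every `ψ = c_L f + c_R g` satisfies
`ψ(Λ) = α₂ ψ'(-Λ)` and `ψ'(Λ) = α₃ ψ(-Λ)` iff `α₂ = -e^{iθ}` and
`α₃ = e^{iθ}`. -/
theorem stmt13 (Λ : ℝ) (hΛ : 0 < Λ) (θ : ℝ) (hθ0 : 0 ≤ θ) (hθ2 : θ < 2 * π)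
    (γr γl : ℂ)
    (hγr : γr = Complex.exp (Complex.I * (θ + Real.sqrt 2 * Λ + 3 * π / 4)))
    (hγl : γl = Complex.exp (Complex.I * (-θ + Real.sqrt 2 * Λ + 3 * π / 4)))
    (α₂ α₃ : ℂ)
    (fBm fBm' fBp fBp' gBm gBm' gBp gBp' : ℂ)
    (hfBm : fBm = LpB Λ)
    (hfBm' : fBm' = Complex.exp (-(Complex.I * (π / 4))) * LpB Λ)
    (hfBp : fBp = γr * RmB Λ)
    (hfBp' : fBp' = Complex.exp (-(Complex.I * (3 * π / 4))) * (γr * RmB Λ))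
    (hgBm : gBm = γl * LmB Λ)
    (hgBm' : gBm' = Complex.exp (Complex.I * (π / 4)) * (γl * LmB Λ))
    (hgBp : gBp = RpB Λ)
    (hgBp' : gBp' = Complex.exp (Complex.I * (3 * π / 4)) * RpB Λ) :
    (∀ cL cR : ℂ,
      cL * fBp + cR * gBp = α₂ * (cL * fBm' + cR * gBm') ∧
      cL * fBp' + cR * gBp' = α₃ * (cL * fBm + cR * gBm)) ↔
    (α₂ = -Complex.exp (Complex.I * θ) ∧ α₃ = Complex.exp (Complex.I * θ)) := by
  have hs0 : (Real.sqrt 2 : ℂ) ≠ 0 := by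
    exact_mod_cast Real.sqrt_ne_zero'.2 (by norm_num)
  have hs2 : (Real.sqrt 2 : ℂ) * (Real.sqrt 2 : ℂ) = 2 := by
    exact_mod_cast Real.mul_self_sqrt (by norm_num)
  have hN : Nc Λ ≠ 0 := by
    simp only [Nc, ne_eq, Complex.ofReal_eq_zero]
    positivity
  have hfm' : fBm' ≠ 0 := by
    rw [hfBm', LpB]
    exact mul_ne_zero (Complex.exp_ne_zero _)
      (mul_ne_zero hN (Complex.exp_ne_zero _))
  have hfm : fBm ≠ 0 := by
    rw [hfBm, LpB]; exact mul_ne_zero hN (Complex.exp_ne_zero _)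
  have k1 : fBp = -Complex.exp (Complex.I * θ) * fBm' := by
    rw [hfBp, hfBm', hγr, RmB, LpB]
    have f3 : Complex.exp (Complex.I * ((θ:ℂ) + (Real.sqrt 2 : ℂ) * (Λ:ℂ) + 3 * (π:ℂ) / 4)
          + (-1 - Complex.I) * (Λ:ℂ) / (Real.sqrt 2 : ℂ))
        = -Complex.exp (Complex.I * (θ:ℂ) + -(Complex.I * ((π:ℂ) / 4))
          + -((1 - Complex.I) * (Λ:ℂ)) / (Real.sqrt 2 : ℂ)) := by
      apply exp_shift_pi
      field_simp
      ring_nf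
      linear_combination 4 * Complex.I * (Λ:ℂ) * hs2
    calc Complex.exp (Complex.I * ((θ:ℂ) + (Real.sqrt 2 : ℂ) * (Λ:ℂ) + 3 * (π:ℂ) / 4)) *
          (Nc Λ * Complex.exp ((-1 - Complex.I) * (Λ:ℂ) / (Real.sqrt 2 : ℂ)))
        = Nc Λ * Complex.exp (Complex.I * ((θ:ℂ) + (Real.sqrt 2 : ℂ) * (Λ:ℂ) + 3 * (π:ℂ) / 4)
            + (-1 - Complex.I) * (Λ:ℂ) / (Real.sqrt 2 : ℂ)) := by
          rw [Complex.exp_add]; ring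
      _ = Nc Λ * -Complex.exp (Complex.I * (θ:ℂ) + -(Complex.I * ((π:ℂ) / 4))
            + -((1 - Complex.I) * (Λ:ℂ)) / (Real.sqrt 2 : ℂ)) := by rw [f3]
      _ = -Complex.exp (Complex.I * (θ:ℂ)) * (Complex.exp (-(Complex.I * ((π:ℂ) / 4))) *
            (Nc Λ * Complex.exp (-((1 - Complex.I) * (Λ:ℂ)) / (Real.sqrt 2 : ℂ)))) := by
          rw [Complex.exp_add, Complex.exp_add]; ring
  have k2 : gBp = -Complex.exp (Complex.I * θ) * gBm' := by
    rw [hgBp, hgBm', hγl, RpB, LmB]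
    have f3 : Complex.exp (Complex.I * (θ:ℂ) + Complex.I * ((π:ℂ) / 4)
          + Complex.I * (-(θ:ℂ) + (Real.sqrt 2 : ℂ) * (Λ:ℂ) + 3 * (π:ℂ) / 4)
          + -((1 + Complex.I) * (Λ:ℂ)) / (Real.sqrt 2 : ℂ))
        = -Complex.exp ((-1 + Complex.I) * (Λ:ℂ) / (Real.sqrt 2 : ℂ)) := by
      apply exp_shift_pi
      field_simp
      ring_nf
      linear_combination 4 * Complex.I * (Λ:ℂ) * hs2
    calc Nc Λ * Complex.exp ((-1 + Complex.I) * (Λ:ℂ) / (Real.sqrt 2 : ℂ))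
        = -(Nc Λ * Complex.exp (Complex.I * (θ:ℂ) + Complex.I * ((π:ℂ) / 4)
            + Complex.I * (-(θ:ℂ) + (Real.sqrt 2 : ℂ) * (Λ:ℂ) + 3 * (π:ℂ) / 4)
            + -((1 + Complex.I) * (Λ:ℂ)) / (Real.sqrt 2 : ℂ))) := by rw [f3]; ring
      _ = -Complex.exp (Complex.I * (θ:ℂ)) * (Complex.exp (Complex.I * ((π:ℂ) / 4)) *
            (Complex.exp (Complex.I * (-(θ:ℂ) + (Real.sqrt 2 : ℂ) * (Λ:ℂ) + 3 * (π:ℂ) / 4)) *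
              (Nc Λ * Complex.exp (-((1 + Complex.I) * (Λ:ℂ)) / (Real.sqrt 2 : ℂ))))) := by
          rw [Complex.exp_add, Complex.exp_add, Complex.exp_add]; ring
  have k3 : fBp' = Complex.exp (Complex.I * θ) * fBm := by
    rw [hfBp', hfBm, hγr, RmB, LpB]
    have f3 : -(Complex.I * (3 * (π:ℂ) / 4))
          + Complex.I * ((θ:ℂ) + (Real.sqrt 2 : ℂ) * (Λ:ℂ) + 3 * (π:ℂ) / 4)
          + (-1 - Complex.I) * (Λ:ℂ) / (Real.sqrt 2 : ℂ)
        = Complex.I * (θ:ℂ) + -((1 - Complex.I) * (Λ:ℂ)) / (Real.sqrt 2 : ℂ) := by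
      field_simp
      ring_nf
      linear_combination 4 * Complex.I * (Λ:ℂ) * hs2
    calc Complex.exp (-(Complex.I * (3 * (π:ℂ) / 4))) *
          (Complex.exp (Complex.I * ((θ:ℂ) + (Real.sqrt 2 : ℂ) * (Λ:ℂ) + 3 * (π:ℂ) / 4)) *
            (Nc Λ * Complex.exp ((-1 - Complex.I) * (Λ:ℂ) / (Real.sqrt 2 : ℂ))))
        = Nc Λ * Complex.exp (-(Complex.I * (3 * (π:ℂ) / 4))
            + Complex.I * ((θ:ℂ) + (Real.sqrt 2 : ℂ) * (Λ:ℂ) + 3 * (π:ℂ) / 4)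
            + (-1 - Complex.I) * (Λ:ℂ) / (Real.sqrt 2 : ℂ)) := by
          rw [Complex.exp_add, Complex.exp_add]; ring
      _ = Nc Λ * Complex.exp (Complex.I * (θ:ℂ)
            + -((1 - Complex.I) * (Λ:ℂ)) / (Real.sqrt 2 : ℂ)) := by rw [f3]
      _ = Complex.exp (Complex.I * (θ:ℂ)) *
            (Nc Λ * Complex.exp (-((1 - Complex.I) * (Λ:ℂ)) / (Real.sqrt 2 : ℂ))) := by
          rw [Complex.exp_add]; ring
  have k4 : gBp' = Complex.exp (Complex.I * θ) * gBm := by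
    rw [hgBp', hgBm, hγl, RpB, LmB]
    have f3 : Complex.I * (3 * (π:ℂ) / 4) + (-1 + Complex.I) * (Λ:ℂ) / (Real.sqrt 2 : ℂ)
        = Complex.I * (θ:ℂ)
          + Complex.I * (-(θ:ℂ) + (Real.sqrt 2 : ℂ) * (Λ:ℂ) + 3 * (π:ℂ) / 4)
          + -((1 + Complex.I) * (Λ:ℂ)) / (Real.sqrt 2 : ℂ) := by
      field_simp
      ring_nf
      linear_combination (-4) * Complex.I * (Λ:ℂ) * hs2
    calc Complex.exp (Complex.I * (3 * (π:ℂ) / 4)) *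
          (Nc Λ * Complex.exp ((-1 + Complex.I) * (Λ:ℂ) / (Real.sqrt 2 : ℂ)))
        = Nc Λ * Complex.exp (Complex.I * (3 * (π:ℂ) / 4)
            + (-1 + Complex.I) * (Λ:ℂ) / (Real.sqrt 2 : ℂ)) := by
          rw [Complex.exp_add]; ring
      _ = Nc Λ * Complex.exp (Complex.I * (θ:ℂ)
            + Complex.I * (-(θ:ℂ) + (Real.sqrt 2 : ℂ) * (Λ:ℂ) + 3 * (π:ℂ) / 4)
            + -((1 + Complex.I) * (Λ:ℂ)) / (Real.sqrt 2 : ℂ)) := by rw [f3]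
      _ = Complex.exp (Complex.I * (θ:ℂ)) *
            (Complex.exp (Complex.I * (-(θ:ℂ) + (Real.sqrt 2 : ℂ) * (Λ:ℂ) + 3 * (π:ℂ) / 4)) *
              (Nc Λ * Complex.exp (-((1 + Complex.I) * (Λ:ℂ)) / (Real.sqrt 2 : ℂ)))) := by
          rw [Complex.exp_add, Complex.exp_add]; ring
  constructor
  · intro h
    obtain ⟨h1, h2⟩ := h 1 0
    simp only [one_mul, zero_mul, add_zero] at h1 h2
    constructor
    · apply mul_right_cancel₀ hfm'
      rw [← h1, k1]
    · apply mul_right_cancel₀ hfm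
      rw [← h2, k3]
  · rintro ⟨rfl, rfl⟩ cL cR
    constructor
    · rw [k1, k2]; ring
    · rw [k3, k4]; ring
end

section
/- Fix Λ > 0 and θ ∈ [0,2π), and set γ_→ := e^{i(θ + √2Λ + 3π/4)}, γ_← := e^{i(−θ + √2Λ + 3π/4)}, f := L₊ + γ_→·R₋, g := R₊ + γ_←·L₋. Then the one-sided boundary values satisfy f(Λ) = e^{i(θ + 3π/4)}·f(−Λ) and g(Λ) = e^{i(θ − 3π/4)}·g(−Λ); equivalently, f(Λ) = −e^{i(θ − π/4)}·f(−Λ) and g(Λ) = −e^{i(θ + π/4)}·g(−Λ). -/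
open ComplexConjugate Real

/-- Proposition 3, part 2 of the paper: with `γ_→ = e^{i(θ+√2Λ+3π/4)}` and
`γ_← = e^{i(-θ+√2Λ+3π/4)}`, the boundary values of `f = L₊ + γ_→ R₋` and
`g = R₊ + γ_← L₋` satisfy `f(Λ) = e^{i(θ+3π/4)} f(-Λ)`,
`g(Λ) = e^{i(θ-3π/4)} g(-Λ)`, equivalently `f(Λ) = -e^{i(θ-π/4)} f(-Λ)`,
`g(Λ) = -e^{i(θ+π/4)} g(-Λ)`. -/
theorem stmt14 (Λ : ℝ) (hΛ : 0 < Λ) (θ : ℝ) (hθ0 : 0 ≤ θ) (hθ2 : θ < 2 * π)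
    (γr γl : ℂ)
    (hγr : γr = Complex.exp (Complex.I * (θ + Real.sqrt 2 * Λ + 3 * π / 4)))
    (hγl : γl = Complex.exp (Complex.I * (-θ + Real.sqrt 2 * Λ + 3 * π / 4)))
    (fBm fBp gBm gBp : ℂ)
    (hfBm : fBm = LpB Λ) (hfBp : fBp = γr * RmB Λ)
    (hgBm : gBm = γl * LmB Λ) (hgBp : gBp = RpB Λ) :
    (fBp = Complex.exp (Complex.I * (θ + 3 * π / 4)) * fBm ∧
     gBp = Complex.exp (Complex.I * (θ - 3 * π / 4)) * gBm) ∧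
    (fBp = -(Complex.exp (Complex.I * (θ - π / 4)) * fBm) ∧
     gBp = -(Complex.exp (Complex.I * (θ + π / 4)) * gBm)) := by
  subst hγr hγl hfBm hfBp hgBm hgBp
  have hs0 : (Real.sqrt 2 : ℂ) ≠ 0 := by
    norm_cast
    positivity
  have hs2 : (Real.sqrt 2 : ℂ) * (Real.sqrt 2 : ℂ) = 2 := by
    norm_cast
    exact Real.mul_self_sqrt (by norm_num)
  have hf : Complex.exp (Complex.I * (θ + Real.sqrt 2 * Λ + 3 * π / 4)) *
      Complex.exp ((-1 - Complex.I) * Λ / Real.sqrt 2) =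
      Complex.exp (Complex.I * (θ + 3 * π / 4)) *
      Complex.exp (-((1 - Complex.I) * Λ) / Real.sqrt 2) := by
    rw [← Complex.exp_add, ← Complex.exp_add]
    congr 1
    push_cast
    field_simp
    linear_combination (4 * Complex.I * Λ) * hs2
  have hg : Complex.exp ((-1 + Complex.I) * Λ / Real.sqrt 2) =
      Complex.exp (Complex.I * (θ - 3 * π / 4)) *
      (Complex.exp (Complex.I * (-θ + Real.sqrt 2 * Λ + 3 * π / 4)) *
      Complex.exp (-((1 + Complex.I) * Λ) / Real.sqrt 2)) := by
    rw [← Complex.exp_add, ← Complex.exp_add]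
    congr 1
    push_cast
    field_simp
    linear_combination (-(4 * Complex.I * Λ)) * hs2
  have h1 : (Complex.exp (Complex.I * (θ + Real.sqrt 2 * Λ + 3 * π / 4))) * RmB Λ =
      Complex.exp (Complex.I * (θ + 3 * π / 4)) * LpB Λ := by
    unfold RmB LpB
    linear_combination Nc Λ * hf
  have h2 : RpB Λ = Complex.exp (Complex.I * (θ - 3 * π / 4)) *
      (Complex.exp (Complex.I * (-θ + Real.sqrt 2 * Λ + 3 * π / 4)) * LmB Λ) := by
    unfold RpB LmB
    linear_combination Nc Λ * hg
  have hpi1 : Complex.exp (Complex.I * (θ + 3 * π / 4)) =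
      -(Complex.exp (Complex.I * (θ - π / 4))) := by
    have : Complex.I * ((θ : ℂ) + 3 * π / 4) = Complex.I * ((θ : ℂ) - π / 4) + π * Complex.I := by
      ring
    rw [this, Complex.exp_add, Complex.exp_pi_mul_I]
    ring
  have hpi2 : Complex.exp (Complex.I * (θ - 3 * π / 4)) =
      -(Complex.exp (Complex.I * (θ + π / 4))) := by
    have : Complex.I * ((θ : ℂ) + π / 4) = Complex.I * ((θ : ℂ) - 3 * π / 4) + π * Complex.I := by
      ring
    rw [this, Complex.exp_add, Complex.exp_pi_mul_I]
    ring
  refine ⟨⟨h1, h2⟩, ?_, ?_⟩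
  · rw [h1, hpi1]; ring
  · rw [h2, hpi2]; ring
end

section
/- Fix Λ > 0 and θ ∈ [0,2π), and set γ_→ := e^{i(θ + √2Λ + 3π/4)}, γ_← := e^{i(−θ + √2Λ + 3π/4)}, f := L₊ + γ_→·R₋, g := R₊ + γ_←·L₋. Let f″ and g″ denote their second derivatives on Ω_Λ := (−∞,−Λ) ∪ (Λ,∞), namely f″ = −i·L₊ on (−∞,−Λ) and f″ = i·γ_→·R₋ on (Λ,∞), g″ = i·γ_←·L₋ on (−∞,−Λ) and g″ = −i·R₊ on (Λ,∞). Then f and g are H₀-diagonal: ∫_{Ω_Λ} ( conj(f(x))·g(x) + conj(f″(x))·g″(x) ) dx = 0. -/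
open ComplexConjugate Real

/-- Proposition 3, part 1 of the paper: `f = L₊ + γ_→ R₋` and
`g = R₊ + γ_← L₋` are `H₀`-diagonal:
`∫_{Ω_Λ} (conj f · g + conj f'' · g'') = 0`, where on `Ω_Λ` one has
`f'' = -i L₊ + i γ_→ R₋` and `g'' = i γ_← L₋ - i R₊`. -/
theorem stmt15 (Λ : ℝ) (hΛ : 0 < Λ) (θ : ℝ) (hθ0 : 0 ≤ θ) (hθ2 : θ < 2 * π)
    (γr γl : ℂ)
    (hγr : γr = Complex.exp (Complex.I * (θ + Real.sqrt 2 * Λ + 3 * π / 4)))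
    (hγl : γl = Complex.exp (Complex.I * (-θ + Real.sqrt 2 * Λ + 3 * π / 4)))
    (f g f'' g'' : ℝ → ℂ)
    (hf : f = fun x => Lp Λ x + γr * Rm Λ x)
    (hg : g = fun x => Rp Λ x + γl * Lm Λ x)
    (hf'' : f'' = fun x => -Complex.I * Lp Λ x + Complex.I * (γr * Rm Λ x))
    (hg'' : g'' = fun x => Complex.I * (γl * Lm Λ x) - Complex.I * Rp Λ x) :
    (∫ x in Set.Iio (-Λ) ∪ Set.Ioi Λ,
      (conj (f x) * g x + conj (f'' x) * g'' x)) = 0 := by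
  apply MeasureTheory.setIntegral_eq_zero_of_forall_eq_zero
  intro x hx
  subst hf hg hf'' hg''
  rcases hx with hx | hx
  · have h1 : ¬ Λ < x := by simp at hx ⊢; linarith
    simp only [Lp, Lm, Rp, Rm, if_neg h1]
    by_cases h2 : x < -Λ <;> simp [h2, map_mul, Complex.conj_I] <;> ring_nf <;> rw [Complex.I_sq] <;> ring
  · have h2 : ¬ x < -Λ := by simp at hx ⊢; linarith
    simp only [Lp, Lm, Rp, Rm, if_neg h2]
    by_cases h1 : Λ < x <;> simp [h1, map_mul, Complex.conj_I] <;> ring_nf <;> rw [Complex.I_sq] <;> ring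
end

section
/- Fix Λ > 0 and unimodular γ_→, γ_← ∈ ℂ, and let f := L₊ + γ_→·R₋ and g := R₊ + γ_←·L₋ with one-sided boundary values as given. For all a_L, a_R, b_L, b_R ∈ ℂ, let φ := a_L·f + a_R·g and ψ := b_L·f + b_R·g, with boundary values φ(∓Λ), φ′(∓Λ), ψ(∓Λ), ψ′(∓Λ) given by the corresponding linear combinations of the boundary values of f and g. Then the Wronskian defect vanishes: (conj(φ′(−Λ))·ψ(−Λ) − conj(φ(−Λ))·ψ′(−Λ)) − (conj(φ′(Λ))·ψ(Λ) − conj(φ(Λ))·ψ′(Λ)) = 0. -/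
open ComplexConjugate Real

private lemma exp_I_real (θ : ℝ) :
    Complex.exp (Complex.I * θ) = (Real.cos θ : ℂ) + (Real.sin θ : ℝ) * Complex.I := by
  rw [mul_comm, Complex.exp_mul_I, ← Complex.ofReal_cos, ← Complex.ofReal_sin]

private lemma e_pi4 : Complex.exp (Complex.I * (π / 4))
    = (Real.sqrt 2 / 2 : ℝ) * (1 + Complex.I) := by
  have : ((π : ℝ) / 4 : ℂ) = ((π / 4 : ℝ) : ℂ) := by push_cast; ring
  rw [this, exp_I_real, Real.cos_pi_div_four, Real.sin_pi_div_four]; ring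

private lemma e_neg_pi4 : Complex.exp (-(Complex.I * (π / 4)))
    = (Real.sqrt 2 / 2 : ℝ) * (1 - Complex.I) := by
  have h : -(Complex.I * ((π : ℝ) / 4)) = Complex.I * ((-(π / 4) : ℝ) : ℂ) := by
    push_cast; ring
  rw [h, exp_I_real, Real.cos_neg, Real.sin_neg, Real.cos_pi_div_four,
    Real.sin_pi_div_four]; push_cast; ring

private lemma cos_three_pi_div_four : Real.cos (3 * π / 4) = -(Real.sqrt 2 / 2) := by
  have h : (3 : ℝ) * π / 4 = π - π / 4 := by ring
  rw [h, Real.cos_pi_sub, Real.cos_pi_div_four]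

private lemma sin_three_pi_div_four : Real.sin (3 * π / 4) = Real.sqrt 2 / 2 := by
  have h : (3 : ℝ) * π / 4 = π - π / 4 := by ring
  rw [h, Real.sin_pi_sub, Real.sin_pi_div_four]

private lemma e_3pi4 : Complex.exp (Complex.I * (3 * π / 4))
    = (Real.sqrt 2 / 2 : ℝ) * (-1 + Complex.I) := by
  have : ((3 : ℂ) * (π : ℝ) / 4) = ((3 * π / 4 : ℝ) : ℂ) := by push_cast; ring
  rw [this, exp_I_real, cos_three_pi_div_four, sin_three_pi_div_four]; push_cast; ring

private lemma e_neg_3pi4 : Complex.exp (-(Complex.I * (3 * π / 4)))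
    = (Real.sqrt 2 / 2 : ℝ) * (-1 - Complex.I) := by
  have h : -(Complex.I * ((3 : ℂ) * (π : ℝ) / 4)) = Complex.I * ((-(3 * π / 4) : ℝ) : ℂ) := by
    push_cast; ring
  rw [h, exp_I_real, Real.cos_neg, Real.sin_neg, cos_three_pi_div_four,
    sin_three_pi_div_four]; push_cast; ring

/-- The key symmetry computation in the proof of Theorem 4, part 1 of the
paper: for all `φ = a_L f + a_R g` and `ψ = b_L f + b_R g`, the Wronskian
defect `W(φ,ψ)` vanishes, where the boundary values of `f = L₊ + γ_→ R₋`
and `g = R₊ + γ_← L₋` are as given. -/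
theorem stmt16 (Λ : ℝ) (hΛ : 0 < Λ) (γr γl : ℂ)
    (hγr : ‖γr‖ = 1) (hγl : ‖γl‖ = 1)
    (fBm fBm' fBp fBp' gBm gBm' gBp gBp' : ℂ)
    (hfBm : fBm = RpB Λ)
    (hfBm' : fBm' = Complex.exp (-(Complex.I * (π / 4))) * RpB Λ)
    (hfBp : fBp = γr * conj (RpB Λ))
    (hfBp' : fBp' = γr * (Complex.exp (-(Complex.I * (3 * π / 4))) * conj (RpB Λ)))
    (hgBm : gBm = γl * conj (RpB Λ))
    (hgBm' : gBm' = γl * (Complex.exp (Complex.I * (π / 4)) * conj (RpB Λ)))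
    (hgBp : gBp = RpB Λ)
    (hgBp' : gBp' = Complex.exp (Complex.I * (3 * π / 4)) * RpB Λ) :
    ∀ aL aR bL bR : ℂ,
      (conj (aL * fBm' + aR * gBm') * (bL * fBm + bR * gBm) -
        conj (aL * fBm + aR * gBm) * (bL * fBm' + bR * gBm')) -
      (conj (aL * fBp' + aR * gBp') * (bL * fBp + bR * gBp) -
        conj (aL * fBp + aR * gBp) * (bL * fBp' + bR * gBp')) = 0 := by
  have hr : conj γr * γr = 1 := by
    rw [mul_comm, Complex.mul_conj']
    norm_cast
    simp [hγr]
  have hl : conj γl * γl = 1 := by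
    rw [mul_comm, Complex.mul_conj']
    norm_cast
    simp [hγl]
  intro aL aR bL bR
  subst hfBm hfBm' hfBp hfBp' hgBm hgBm' hgBp hgBp'
  rw [e_pi4, e_neg_pi4, e_3pi4, e_neg_3pi4]
  simp only [map_mul, map_add, map_sub, map_one, map_neg, Complex.conj_conj, Complex.conj_I,
    Complex.conj_ofReal]
  linear_combination (-(2 * Complex.I * (Real.sqrt 2 / 2 : ℝ) * RpB Λ * conj (RpB Λ) *
      conj aL * bL)) * hr - (2 * Complex.I * (Real.sqrt 2 / 2 : ℝ) * RpB Λ * conj (RpB Λ) *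
      conj aR * bR) * hl
end
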